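/- For every natural number n, the hyperoctahedral group H_{n+1} (the group of signed permutations of Fin (n+1)) is generated by the set of block-flip elements {w_{p,q,r} : p + q + r = n + 1}; that is, Subgroup.closure {w_{p,q,r} : p, q, r ∈ ℕ, p + q + r = n + 1} = ⊤. -/

import Mathlib

/-- The action of permutations on sign vectors, permuting the coordinates. -/
def signPermAction (m : ℕ) :
    Equiv.Perm (Fin m) →* MulAut (Fin m → Multiplicative (ZMod 2)) where
  toFun σ := MulEquiv.arrowCongr σ (MulEquiv.refl (Multiplicative (ZMod 2)))
  map_one' := by ext f i; rfl
  map_mul' σ τ := by ext f i; rfl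

/-- The hyperoctahedral group `H_{n+1} = C₂^{n+1} ⋊ Σ_{n+1}`, realized as the group of
signed permutations of `Fin (n+1)`. -/
abbrev HyperoctahedralGroup (n : ℕ) : Type :=
  (Fin (n + 1) → Multiplicative (ZMod 2)) ⋊[signPermAction (n + 1)] Equiv.Perm (Fin (n + 1))

/-- The underlying permutation of the block-flip element `w_{p,q,r}`: the first block of
size `p` moves to the end, the middle block of size `q` is reversed, and the last block of
size `r` moves to the front. -/
def blockFlipPerm (n p q r : ℕ) (h : p + q + r = n + 1) : Equiv.Perm (Fin (n + 1)) :=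
  (finCongr h.symm).trans <|
    (finSumFinEquiv (m := p + q) (n := r)).symm.trans <|
      ((finSumFinEquiv (m := p) (n := q)).symm.sumCongr (Equiv.refl (Fin r))).trans <|
        (Equiv.sumComm (Fin p ⊕ Fin q) (Fin r)).trans <|
          ((Equiv.refl (Fin r)).sumCongr
              (((Equiv.refl (Fin p)).sumCongr (Fin.revPerm (n := q))).trans
                (Equiv.sumComm (Fin p) (Fin q)))).trans <|
            ((Equiv.refl (Fin r)).sumCongr (finSumFinEquiv (m := q) (n := p))).trans <|
              (finSumFinEquiv (m := r) (n := q + p)).trans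
                (finCongr (by omega : r + (q + p) = n + 1))

/-- The block-flip element `w_{p,q,r}` of the hyperoctahedral group: its sign component is
nontrivial exactly at the `q` middle-block positions `p, …, p + q - 1`, and its underlying
permutation is `blockFlipPerm`. -/
def blockFlip (n p q r : ℕ) (h : p + q + r = n + 1) : HyperoctahedralGroup n :=
  ⟨fun i => if p ≤ (i : ℕ) ∧ (i : ℕ) < p + q then Multiplicative.ofAdd (1 : ZMod 2) else 1,
    blockFlipPerm n p q r h⟩

lemma blockFlipPerm_apply (n p q r : ℕ) (h : p + q + r = n + 1) (i : Fin (n + 1)) :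
    ((blockFlipPerm n p q r h i : Fin (n + 1)) : ℕ) =
      if (i : ℕ) < p then r + q + i
      else if (i : ℕ) < p + q then r + p + q - 1 - i
      else (i : ℕ) - (p + q) := by
  unfold blockFlipPerm
  simp only [Equiv.trans_apply, finCongr_apply, Equiv.sumCongr_apply]
  rcases lt_or_ge (i : ℕ) (p + q) with h1 | h1
  · have e : (Fin.cast h.symm i) = Fin.castAdd r ⟨(i : ℕ), h1⟩ := by ext; simp
    rw [e, finSumFinEquiv_symm_apply_castAdd]
    rcases lt_or_ge (i : ℕ) p with h2 | h2
    · have e2 : (⟨(i : ℕ), h1⟩ : Fin (p + q)) = Fin.castAdd q ⟨(i : ℕ), h2⟩ := by ext; simp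
      rw [Sum.map_inl, e2, finSumFinEquiv_symm_apply_castAdd]
      simp [Fin.ext_iff]
      split_ifs <;> omega
    · have e2 : (⟨(i : ℕ), h1⟩ : Fin (p + q)) = Fin.natAdd p ⟨(i : ℕ) - p, by omega⟩ := by
        ext; simp; omega
      rw [Sum.map_inl, e2, finSumFinEquiv_symm_apply_natAdd]
      simp [Fin.ext_iff, Fin.rev]
      split_ifs <;> omega
  · have e : (Fin.cast h.symm i) = Fin.natAdd (p + q) ⟨(i : ℕ) - (p + q), by omega⟩ := by
      ext; simp; omega
    rw [e, finSumFinEquiv_symm_apply_natAdd]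
    simp [Fin.ext_iff, Fin.rev]
    split_ifs <;> omega

lemma signPermAction_mulSingle (n : ℕ) (σ : Equiv.Perm (Fin (n + 1))) (j : Fin (n + 1))
    (a : Multiplicative (ZMod 2)) :
    signPermAction (n + 1) σ (Pi.mulSingle j a) = Pi.mulSingle (σ j) a := by
  funext i
  simp only [signPermAction, MonoidHom.coe_mk, OneHom.coe_mk, MulEquiv.arrowCongr_apply,
    MulEquiv.refl_apply, Pi.mulSingle_apply]
  simp only [Equiv.symm_apply_eq]

open SemidirectProduct in
/-- The hyperoctahedral group `H_{n+1}` is generated by the block-flip elements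
`w_{p,q,r}` with `p + q + r = n + 1`. -/
theorem hyperoctahedral_closure_blockFlips (n : ℕ) :
    Subgroup.closure
      {x : HyperoctahedralGroup n |
        ∃ (p q r : ℕ) (h : p + q + r = n + 1), x = blockFlip n p q r h} = ⊤ := by
  set K := Subgroup.closure
      {x : HyperoctahedralGroup n |
        ∃ (p q r : ℕ) (h : p + q + r = n + 1), x = blockFlip n p q r h} with hKdef
  have hmem : ∀ (p q r : ℕ) (h : p + q + r = n + 1), blockFlip n p q r h ∈ K :=
    fun p q r h => Subgroup.subset_closure ⟨p, q, r, h, rfl⟩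
  -- block flips with trivial middle block have trivial sign
  have hq0 : ∀ (p r : ℕ) (h : p + 0 + r = n + 1),
      (inr (blockFlipPerm n p 0 r h) : HyperoctahedralGroup n) ∈ K := by
    intro p r h
    have he : blockFlip n p 0 r h = inr (blockFlipPerm n p 0 r h) := by
      have hl : (blockFlip n p 0 r h).left = 1 := by
        funext i
        simp only [blockFlip]
        rw [if_neg (by omega)]
        rfl
      rw [← inl_left_mul_inr_right (blockFlip n p 0 r h)] ; rw [hl]
      simp only [map_one, one_mul]
      rfl
    rw [← he]
    exact hmem p 0 r h
  -- the sign flip at coordinate 0 lies in K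
  have hδ0 : (inl (Pi.mulSingle (0 : Fin (n + 1)) (Multiplicative.ofAdd (1 : ZMod 2)))
      : HyperoctahedralGroup n) ∈ K := by
    have h1 : (0 : ℕ) + 1 + n = n + 1 := by omega
    have h2 : 1 + 0 + n = n + 1 := by omega
    have hperm : blockFlipPerm n 0 1 n h1 = blockFlipPerm n 1 0 n h2 := by
      apply Equiv.ext
      intro i
      apply Fin.ext
      have hi := i.isLt
      rw [blockFlipPerm_apply, blockFlipPerm_apply]
      split_ifs <;> omega
    have hleft : (blockFlip n 0 1 n h1).left
        = Pi.mulSingle (0 : Fin (n + 1)) (Multiplicative.ofAdd (1 : ZMod 2)) := by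
      funext i
      simp only [blockFlip, Pi.mulSingle_apply, Fin.ext_iff, Fin.val_zero]
      split_ifs <;> first | rfl | omega
    have key : (inl (blockFlip n 0 1 n h1).left : HyperoctahedralGroup n)
        = blockFlip n 0 1 n h1 * (inr (blockFlipPerm n 1 0 n h2))⁻¹ := by
      rw [← hperm]
      have := inl_left_mul_inr_right (blockFlip n 0 1 n h1)
      have hr : (blockFlip n 0 1 n h1).right = blockFlipPerm n 0 1 n h1 := rfl
      rw [hr] at this
      rw [eq_mul_inv_iff_mul_eq, this]
    rw [← hleft, key]
    exact mul_mem (hmem 0 1 n h1) (inv_mem (hq0 1 n h2))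
  -- sign flips at every coordinate lie in K
  have hδ : ∀ j : Fin (n + 1),
      (inl (Pi.mulSingle j (Multiplicative.ofAdd (1 : ZMod 2)))
        : HyperoctahedralGroup n) ∈ K := by
    intro j
    have hj := j.isLt
    have h3 : (n + 1 - (j : ℕ)) + 0 + (j : ℕ) = n + 1 := by omega
    set σ := blockFlipPerm n (n + 1 - (j : ℕ)) 0 (j : ℕ) h3 with hσ
    have hσ0 : σ 0 = j := by
      apply Fin.ext
      rw [blockFlipPerm_apply]
      have h0 : ((0 : Fin (n + 1)) : ℕ) = 0 := rfl
      split_ifs <;> omega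
    have : (inl (Pi.mulSingle j (Multiplicative.ofAdd (1 : ZMod 2)))
        : HyperoctahedralGroup n)
        = inr σ * inl (Pi.mulSingle (0 : Fin (n + 1)) (Multiplicative.ofAdd (1 : ZMod 2)))
          * (inr σ)⁻¹ := by
      rw [← map_inv, ← inl_aut, signPermAction_mulSingle, hσ0]
    rw [this]
    exact mul_mem (mul_mem ((hq0 _ _ h3)) hδ0) (inv_mem (hq0 _ _ h3))
  -- all sign vectors lie in K
  have hinl : ∀ f : Fin (n + 1) → Multiplicative (ZMod 2),
      (inl f : HyperoctahedralGroup n) ∈ K := by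
    intro f
    have hf : ∀ j : Fin (n + 1), Pi.mulSingle j (f j)
        ∈ K.comap (inl : _ →* HyperoctahedralGroup n) := by
      intro j
      have : f j = 1 ∨ f j = Multiplicative.ofAdd (1 : ZMod 2) := by
        generalize f j = a
        revert a
        decide
      rcases this with hfj | hfj
      · rw [hfj, Pi.mulSingle_one]
        exact Subgroup.one_mem _
      · rw [hfj]
        exact hδ j
    have : f ∈ K.comap (inl : _ →* HyperoctahedralGroup n) := by
      rw [← Finset.univ_prod_mulSingle f]
      exact Subgroup.prod_mem _ fun j _ => hf j
    exact this
  -- the projection of K to the symmetric group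
  set Q := K.map (rightHom : HyperoctahedralGroup n →* Equiv.Perm (Fin (n + 1))) with hQdef
  have hQ : ∀ (p q r : ℕ) (h : p + q + r = n + 1), blockFlipPerm n p q r h ∈ Q := by
    intro p q r h
    exact ⟨blockFlip n p q r h, hmem p q r h, rfl⟩
  have hrev : ∀ q ≤ n + 1, ∃ ρ ∈ Q, ∀ i : Fin (n + 1),
      ((ρ i : Fin (n + 1)) : ℕ) = if (i : ℕ) < q then q - 1 - (i : ℕ) else (i : ℕ) := by
    intro q hq
    refine ⟨blockFlipPerm n (n + 1 - q) 0 q (by omega) *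
      blockFlipPerm n 0 q (n + 1 - q) (by omega),
      mul_mem (hQ _ _ _ _) (hQ _ _ _ _), fun i => ?_⟩
    have hi := i.isLt
    simp only [Equiv.Perm.mul_apply, blockFlipPerm_apply]
    split_ifs <;> omega
  have hswap0 : ∀ k : Fin (n + 1), Equiv.swap 0 k ∈ Q := by
    intro k
    rcases eq_or_ne k 0 with rfl | hk
    · rw [Equiv.swap_self]
      exact Q.one_mem
    · set m := (k : ℕ) with hm
      have hm1 : 1 ≤ m := by
        rcases Nat.eq_zero_or_pos m with h0 | h0
        · exact absurd (Fin.ext h0) hk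
        · exact h0
      have hmn : m ≤ n := by omega
      obtain ⟨ρ1, hρ1Q, hρ1⟩ := hrev (m + 1) (by omega)
      obtain ⟨ρ2, hρ2Q, hρ2⟩ := hrev m (by omega)
      obtain ⟨ρ3, hρ3Q, hρ3⟩ := hrev (m - 1) (by omega)
      have heq : Equiv.swap 0 k = ρ1 * ρ2 * ρ3 * ρ2 := by
        apply Equiv.ext
        intro i
        apply Fin.ext
        have hi := i.isLt
        simp only [Equiv.Perm.mul_apply, hρ1, hρ2, hρ3, Equiv.swap_apply_def]
        rw [apply_ite (Fin.val), apply_ite (Fin.val)]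
        simp only [Fin.ext_iff, Fin.val_zero, ← hm]
        split_ifs <;> omega
      rw [heq]
      exact mul_mem (mul_mem (mul_mem hρ1Q hρ2Q) hρ3Q) hρ2Q
  have hswap : ∀ a b : Fin (n + 1), Equiv.swap a b ∈ Q := by
    intro a b
    rcases eq_or_ne a b with rfl | hab
    · rw [Equiv.swap_self]; exact Q.one_mem
    rcases eq_or_ne a 0 with rfl | ha
    · exact hswap0 b
    rcases eq_or_ne b 0 with rfl | hb
    · rw [Equiv.swap_comm]; exact hswap0 a
    have h : Equiv.swap a b = Equiv.swap (Equiv.swap 0 a 0) (Equiv.swap 0 a b) := by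
      rw [Equiv.swap_apply_left, Equiv.swap_apply_of_ne_of_ne hb (Ne.symm hab)]
    rw [h, Equiv.swap_apply_apply]
    exact mul_mem (mul_mem (hswap0 a) (hswap0 _)) (inv_mem (hswap0 a))
  have hQtop : Q = ⊤ := by
    rw [eq_top_iff, ← Equiv.Perm.closure_isSwap, Subgroup.closure_le]
    rintro σ ⟨a, b, hab, rfl⟩
    exact hswap a b
  -- conclude
  rw [eq_top_iff]
  rintro x -
  have hx : x = inl x.left * inr x.right := (inl_left_mul_inr_right x).symm
  have hr : x.right ∈ Q := hQtop ▸ Subgroup.mem_top x.right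
  obtain ⟨y, hyK, hy⟩ := hr
  have hy' : (inr x.right : HyperoctahedralGroup n) = (inl y.left)⁻¹ * y := by
    rw [← hy]
    rw [eq_inv_mul_iff_mul_eq]
    exact inl_left_mul_inr_right y
  rw [hx, hy']
  exact mul_mem (hinl x.left) (mul_mem (inv_mem (hinl y.left)) hyK)
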